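/- arXiv:1611.05679 — 2 statements merged into one kernel-verified Lean document; each statement's English description precedes it below -/
import Mathlib

section
/- Let Q be a key polynomial with ε := ε(Q) and f ∈ K[x]. If for some b ∈ ℕ we have ν_Q(f) - ν_Q(∂_b f) = bε and ν_Q(∂_b f) = ν(∂_b f), then ε(f) ≥ ε; if additionally ν(f) > ν_Q(f), then ε(f) > ε. -/
open Polynomial
open scoped Classical
noncomputable section

/-- `ν` is (the restriction to nonzero polynomials of) a valuation on `K[x]`,
nontrivial on `K`, with `ν(x) ≥ 0`.  Values are taken in a linearly ordered
field `Γ` (playing the role of the divisible hull of the value group). -/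
structure IsVal {K : Type*} [Field K] {Γ : Type*} [Field Γ] [LinearOrder Γ] [IsStrictOrderedRing Γ]
    (ν : Polynomial K → Γ) : Prop where
  map_mul : ∀ f g : Polynomial K, f ≠ 0 → g ≠ 0 → ν (f * g) = ν f + ν g
  map_add : ∀ f g : Polynomial K, f ≠ 0 → g ≠ 0 → f + g ≠ 0 →
    min (ν f) (ν g) ≤ ν (f + g)
  nontrivial : ∃ a : K, a ≠ 0 ∧ ν (C a) ≠ 0
  nonneg_x : 0 ≤ ν X

/-- `ε(f) = max_{b ≥ 1, ∂_b f ≠ 0} (ν(f) - ν(∂_b f))/b`, where `∂_b` is the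
`b`-th formal (Hasse) derivative.  (Terms with `∂_b f = 0` correspond to the
value `-∞` and are omitted from the maximum.) -/
noncomputable def eps {K : Type*} [Field K] {Γ : Type*} [Field Γ] [LinearOrder Γ] [IsStrictOrderedRing Γ]
    (ν : Polynomial K → Γ) (f : Polynomial K) : Γ :=
  if h : ((Finset.Icc 1 f.natDegree).filter
      fun b => Polynomial.hasseDeriv b f ≠ 0).Nonempty then
    ((Finset.Icc 1 f.natDegree).filter
      fun b => Polynomial.hasseDeriv b f ≠ 0).sup' h
      fun b => (ν f - ν (Polynomial.hasseDeriv b f)) / (b : Γ)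
  else 0

/-- A monic (nonconstant) polynomial `Q` is a key polynomial for `ν` if every
`f ∈ K[x]` with `ε(f) ≥ ε(Q)` satisfies `deg f ≥ deg Q`. -/
def IsKeyPol {K : Type*} [Field K] {Γ : Type*} [Field Γ] [LinearOrder Γ] [IsStrictOrderedRing Γ]
    (ν : Polynomial K → Γ) (Q : Polynomial K) : Prop :=
  Q.Monic ∧ 1 ≤ Q.natDegree ∧
    ∀ f : Polynomial K, 1 ≤ f.natDegree → eps ν Q ≤ eps ν f →
      Q.natDegree ≤ f.natDegree

/-- The `i`-th coefficient `f_i` of the `q`-standard expansion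
`f = Σ f_i q^i` (each `f_i = 0` or `deg f_i < deg q`), for `q` monic. -/
noncomputable def qCoeff {K : Type*} [Field K] (q f : Polynomial K) (i : ℕ) :
    Polynomial K :=
  (f /ₘ q ^ i) %ₘ q

/-- The `q`-truncation `ν_q(f) = min_i ν(f_i q^i)` of `ν`, the minimum taken
over the nonzero coefficients of the `q`-standard expansion of `f`. -/
noncomputable def truncVal {K : Type*} [Field K] {Γ : Type*}
    [Field Γ] [LinearOrder Γ] [IsStrictOrderedRing Γ] (ν : Polynomial K → Γ) (q f : Polynomial K) : Γ :=
  if h : ((Finset.range (f.natDegree + 1)).filter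
      fun i => qCoeff q f i ≠ 0).Nonempty then
    ((Finset.range (f.natDegree + 1)).filter
      fun i => qCoeff q f i ≠ 0).inf' h
      fun i => ν (qCoeff q f i * q ^ i)
  else 0

/-- `I(Q) = {b : (ν(Q) - ν(∂_b Q))/b = ε(Q)}`. -/
def Iset {K : Type*} [Field K] {Γ : Type*} [Field Γ] [LinearOrder Γ] [IsStrictOrderedRing Γ]
    (ν : Polynomial K → Γ) (Q : Polynomial K) : Set ℕ :=
  {b | 1 ≤ b ∧ Polynomial.hasseDeriv b Q ≠ 0 ∧
    (ν Q - ν (Polynomial.hasseDeriv b Q)) / (b : Γ) = eps ν Q}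

/-- `S_Q(f) = {i : ν(f_i Q^i) = ν_Q(f)}` (over nonzero coefficients). -/
def Sset {K : Type*} [Field K] {Γ : Type*} [Field Γ] [LinearOrder Γ] [IsStrictOrderedRing Γ]
    (ν : Polynomial K → Γ) (q f : Polynomial K) : Set ℕ :=
  {i | qCoeff q f i ≠ 0 ∧ ν (qCoeff q f i * q ^ i) = truncVal ν q f}



section Aux

variable {K : Type*} [Field K] {Γ : Type*} [Field Γ] [LinearOrder Γ] [IsStrictOrderedRing Γ]

lemma divByMonic_pow_succ {q : Polynomial K} (hq : q.Monic) (f : Polynomial K) (i : ℕ) :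
    f /ₘ q ^ (i + 1) = (f /ₘ q) /ₘ q ^ i := by
  refine (Polynomial.div_modByMonic_unique ((f /ₘ q) /ₘ q ^ i)
    (f %ₘ q + q * ((f /ₘ q) %ₘ q ^ i)) (hq.pow _) ⟨?_, ?_⟩).1
  · rw [pow_succ', mul_assoc, add_assoc, ← mul_add,
      Polynomial.modByMonic_add_div (f /ₘ q) (q ^ i),
      Polynomial.modByMonic_add_div f q]
  · have h1 : (f %ₘ q).degree < (q ^ (i + 1)).degree := by
      refine lt_of_lt_of_le (Polynomial.degree_modByMonic_lt f hq) ?_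
      exact Polynomial.degree_le_of_dvd (dvd_pow_self q (Nat.succ_ne_zero i))
        (hq.pow (i + 1)).ne_zero
    have h2 : (q * ((f /ₘ q) %ₘ q ^ i)).degree < (q ^ (i + 1)).degree := by
      rw [pow_succ', Polynomial.degree_mul, Polynomial.degree_mul]
      refine WithBot.add_lt_add_left ?_ (Polynomial.degree_modByMonic_lt (f /ₘ q) (hq.pow i))
      exact fun h => hq.ne_zero (Polynomial.degree_eq_bot.mp h)
    calc (f %ₘ q + q * ((f /ₘ q) %ₘ q ^ i)).degree
        ≤ max (f %ₘ q).degree (q * ((f /ₘ q) %ₘ q ^ i)).degree := Polynomial.degree_add_le _ _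
      _ < (q ^ (i + 1)).degree := max_lt h1 h2

lemma qCoeff_succ_eq {q : Polynomial K} (hq : q.Monic) (f : Polynomial K) (i : ℕ) :
    qCoeff q f (i + 1) = qCoeff q (f /ₘ q) i := by
  rw [qCoeff, qCoeff, divByMonic_pow_succ hq]

lemma qCoeff_zero_eq (q f : Polynomial K) : qCoeff q f 0 = f %ₘ q := by
  rw [qCoeff, pow_zero, Polynomial.divByMonic_one]

lemma sum_qCoeff {q : Polynomial K} (hq : q.Monic) (hq1 : 1 ≤ q.natDegree) :
    ∀ (n : ℕ) (f : Polynomial K), f.natDegree < n →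
      ∑ i ∈ Finset.range n, qCoeff q f i * q ^ i = f := by
  intro n
  induction n with
  | zero => intro f hf; exact absurd hf (Nat.not_lt_zero _)
  | succ n ih =>
    intro f hf
    rw [Finset.sum_range_succ', qCoeff_zero_eq, pow_zero, mul_one]
    have hstep : ∀ i ∈ Finset.range n,
        qCoeff q f (i + 1) * q ^ (i + 1) = qCoeff q (f /ₘ q) i * q ^ i * q := by
      intro i _
      rw [qCoeff_succ_eq hq, pow_succ, mul_assoc]
    rw [Finset.sum_congr rfl hstep, ← Finset.sum_mul]
    by_cases h0 : f /ₘ q = 0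
    · have hz : ∀ i ∈ Finset.range n, qCoeff q (f /ₘ q) i * q ^ i = 0 := by
        intro i _
        rw [h0, qCoeff, Polynomial.zero_divByMonic, Polynomial.zero_modByMonic, zero_mul]
      rw [Finset.sum_congr rfl hz, Finset.sum_const_zero, zero_mul, zero_add]
      conv_rhs => rw [← Polynomial.modByMonic_add_div f q, h0, mul_zero, add_zero]
    · have hd : (f /ₘ q).natDegree < n := by
        have hge : q.natDegree ≤ f.natDegree := by
          have := (Polynomial.divByMonic_eq_zero_iff hq).not.mp h0
          push_neg at this
          exact Polynomial.natDegree_le_natDegree this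
        rw [Polynomial.natDegree_divByMonic f hq]
        omega
      rw [ih (f /ₘ q) hd, mul_comm]
      exact (add_comm _ _).trans (Polynomial.modByMonic_add_div f q)

lemma inf'_le_val_sum {ι : Type*} {ν : Polynomial K → Γ} (hν : IsVal ν)
    (s : Finset ι) (hs : s.Nonempty) (t : ι → Polynomial K)
    (ht : ∀ i ∈ s, t i ≠ 0) (h0 : ∑ i ∈ s, t i ≠ 0) :
    s.inf' hs (fun i => ν (t i)) ≤ ν (∑ i ∈ s, t i) := by
  induction hs using Finset.Nonempty.cons_induction with
  | singleton a => simp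
  | cons a s ha hs ih =>
    rw [Finset.sum_cons] at h0 ⊢
    rw [Finset.inf'_cons hs]
    have hta : t a ≠ 0 := ht a (Finset.mem_cons_self a s)
    have ht' : ∀ i ∈ s, t i ≠ 0 := fun i hi => ht i (Finset.mem_cons_of_mem hi)
    by_cases hsum : ∑ i ∈ s, t i = 0
    · rw [hsum, add_zero] at h0 ⊢
      exact min_le_of_left_le le_rfl
    · refine le_trans ?_ (hν.map_add _ _ hta hsum h0)
      exact min_le_min le_rfl (ih ht' hsum)

lemma truncVal_le_val {ν : Polynomial K → Γ} (hν : IsVal ν)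
    {q : Polynomial K} (hq : q.Monic) (hq1 : 1 ≤ q.natDegree)
    {f : Polynomial K} (hf : f ≠ 0) : truncVal ν q f ≤ ν f := by
  have hsum : ∑ i ∈ Finset.range (f.natDegree + 1), qCoeff q f i * q ^ i = f :=
    sum_qCoeff hq hq1 _ f (Nat.lt_succ_self _)
  set s := (Finset.range (f.natDegree + 1)).filter fun i => qCoeff q f i ≠ 0 with hsdef
  have hfsum : ∑ i ∈ s, qCoeff q f i * q ^ i = f := by
    rw [hsdef, Finset.sum_filter_of_ne, hsum]
    intro i _ hne
    intro h
    rw [h, zero_mul] at hne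
    exact hne rfl
  have hne : s.Nonempty := by
    rcases Finset.eq_empty_or_nonempty s with h | h
    · exfalso; apply hf; rw [← hfsum, h, Finset.sum_empty]
    · exact h
  have ht : ∀ i ∈ s, qCoeff q f i * q ^ i ≠ 0 := by
    intro i hi
    have := (Finset.mem_filter.mp hi).2
    exact mul_ne_zero this (pow_ne_zero _ hq.ne_zero)
  have := inf'_le_val_sum hν s hne (fun i => qCoeff q f i * q ^ i) ht (by rw [hfsum]; exact hf)
  rw [hfsum] at this
  rw [truncVal, dif_pos hne]
  exact this

end Aux

variable {K : Type*} [Field K] {Γ : Type*} [Field Γ] [LinearOrder Γ] [IsStrictOrderedRing Γ]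

/-- If `ν_Q(f) - ν_Q(∂_b f) = b ε(Q)` with `ν_Q(∂_b f) = ν(∂_b f)`, then
`ε(f) ≥ ε(Q)`; if moreover `ν(f) > ν_Q(f)`, then `ε(f) > ε(Q)`. -/
theorem eps_ge_of_trunc_eq (ν : Polynomial K → Γ) (hν : IsVal ν)
    (Q : Polynomial K) (hQ : IsKeyPol ν Q) (f : Polynomial K) (hf : f ≠ 0)
    (b : ℕ) (hb : 1 ≤ b) (hder : Polynomial.hasseDeriv b f ≠ 0)
    (heq : truncVal ν Q f - truncVal ν Q (Polynomial.hasseDeriv b f) =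
      (b : Γ) * eps ν Q)
    (htr : truncVal ν Q (Polynomial.hasseDeriv b f) =
      ν (Polynomial.hasseDeriv b f)) :
    eps ν Q ≤ eps ν f ∧ (truncVal ν Q f < ν f → eps ν Q < eps ν f) := by
  obtain ⟨hQm, hQ1, -⟩ := hQ
  have hbdeg : b ≤ f.natDegree := by
    by_contra h
    exact hder (Polynomial.hasseDeriv_eq_zero_of_lt_natDegree f b (lt_of_not_ge h))
  have hbΓ : (0 : Γ) < (b : Γ) := by exact_mod_cast hb
  have hmem : b ∈ (Finset.Icc 1 f.natDegree).filter
      fun c => Polynomial.hasseDeriv c f ≠ 0 := by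
    rw [Finset.mem_filter, Finset.mem_Icc]
    exact ⟨⟨hb, hbdeg⟩, hder⟩
  have hne : ((Finset.Icc 1 f.natDegree).filter
      fun c => Polynomial.hasseDeriv c f ≠ 0).Nonempty := ⟨b, hmem⟩
  have hterm : (ν f - ν (Polynomial.hasseDeriv b f)) / (b : Γ) ≤ eps ν f := by
    rw [eps, dif_pos hne]
    exact Finset.le_sup' (fun c => (ν f - ν (Polynomial.hasseDeriv c f)) / (c : Γ)) hmem
  have htrle : truncVal ν Q f ≤ ν f := truncVal_le_val hν hQm hQ1 hf
  constructor
  · refine le_trans ((le_div_iff₀ hbΓ).mpr ?_) hterm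
    rw [mul_comm, ← heq, htr]
    have := htrle
    linarith
  · intro hstrict
    refine lt_of_lt_of_le ((lt_div_iff₀ hbΓ).mpr ?_) hterm
    rw [mul_comm, ← heq, htr]
    linarith
end
end

section
/- Let {a_ρ}_{ρ<λ} be a pseudo-convergent sequence in (K, ν) and f ∈ K[x] a polynomial such that {a_ρ} fixes the values of all formal derivatives ∂_i f (1 ≤ i ≤ deg f). If {a_ρ} fixes the value of f, then ν_{x-a_ρ}(f) = ν(f) for all sufficiently large ρ; if {a_ρ} does not fix the value of f, then ν_{x-a_ρ}(f) < ν(f) for every ρ < λ. -/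
open Polynomial
open scoped Classical
noncomputable section

section MyHelpers
variable {K : Type*} [Field K] {Γ : Type*} [Field Γ] [LinearOrder Γ] [IsStrictOrderedRing Γ]
  {ν : Polynomial K → Γ}

lemma IsVal.one' (hν : IsVal ν) : ν 1 = 0 := by
  have := hν.map_mul 1 1 one_ne_zero one_ne_zero
  simp at this; linarith

lemma IsVal.negone (hν : IsVal ν) : ν (-1 : K[X]) = 0 := by
  have := hν.map_mul (-1) (-1) (by simp) (by simp)
  simp [hν.one'] at this; linarith

lemma IsVal.neg' (hν : IsVal ν) {g : K[X]} (hg : g ≠ 0) : ν (-g) = ν g := by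
  have := hν.map_mul (-1) g (by simp) hg
  simp [hν.negone] at this; simpa using this

lemma IsVal.pow' (hν : IsVal ν) {g : K[X]} (hg : g ≠ 0) (n : ℕ) :
    ν (g ^ n) = (n : Γ) * ν g := by
  induction n with
  | zero => simp [hν.one']
  | succ n ih =>
      rw [pow_succ, hν.map_mul _ _ (pow_ne_zero _ hg) hg, ih]
      push_cast; ring

lemma IsVal.add_eq (hν : IsVal ν) {g h : K[X]} (hg : g ≠ 0) (hh : h ≠ 0)
    (hlt : ν g < ν h) : g + h ≠ 0 ∧ ν (g + h) = ν g := by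
  have hne : g + h ≠ 0 := by
    intro e
    have : h = -g := by linear_combination (norm := ring_nf) e
    rw [this, hν.neg' hg] at hlt; exact lt_irrefl _ hlt
  refine ⟨hne, le_antisymm ?_ ?_⟩
  · have h3 : (g + h) + (-h) = g := by ring
    have h2 := hν.map_add (g + h) (-h) hne (neg_ne_zero.2 hh) (by rw [h3]; exact hg)
    rw [h3, hν.neg' hh] at h2
    rcases min_cases (ν (g + h)) (ν h) with ⟨he, _⟩ | ⟨he, hc⟩
    · rw [he] at h2; exact h2
    · rw [he] at h2; exact absurd (lt_of_lt_of_le hlt h2) (lt_irrefl _)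
  · have := hν.map_add g h hg hh hne
    rw [min_eq_left hlt.le] at this; exact this

lemma IsVal.sum_ge (hν : IsVal ν) {ι : Type*} {s : Finset ι} {t : ι → K[X]}
    (ht : ∀ i ∈ s, t i ≠ 0) {b : Γ} (hb : ∀ i ∈ s, b ≤ ν (t i)) :
    s.sum t = 0 ∨ b ≤ ν (s.sum t) := by
  classical
  induction s using Finset.induction_on with
  | empty => simp
  | @insert j s hj ih =>
      have htj : t j ≠ 0 := ht j (Finset.mem_insert_self _ _)
      have ht' : ∀ i ∈ s, t i ≠ 0 := fun i hi => ht i (Finset.mem_insert_of_mem hi)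
      have hb' : ∀ i ∈ s, b ≤ ν (t i) := fun i hi => hb i (Finset.mem_insert_of_mem hi)
      rw [Finset.sum_insert hj]
      rcases ih ht' hb' with h0 | hge
      · rw [h0, add_zero]; exact Or.inr (hb j (Finset.mem_insert_self _ _))
      · by_cases hs0 : s.sum t = 0
        · rw [hs0, add_zero]; exact Or.inr (hb j (Finset.mem_insert_self _ _))
        · by_cases hsum : t j + s.sum t = 0
          · exact Or.inl hsum
          · refine Or.inr (le_trans ?_ (hν.map_add _ _ htj hs0 hsum))
            exact le_min (hb j (Finset.mem_insert_self _ _)) hge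

lemma IsVal.sum_eq (hν : IsVal ν) {ι : Type*} {s : Finset ι} {t : ι → K[X]}
    (ht : ∀ i ∈ s, t i ≠ 0) {i₀ : ι} (hi₀ : i₀ ∈ s)
    (hmin : ∀ i ∈ s, i ≠ i₀ → ν (t i₀) < ν (t i)) :
    s.sum t ≠ 0 ∧ ν (s.sum t) = ν (t i₀) := by
  classical
  have hsplit : s.sum t = t i₀ + (s.erase i₀).sum t := by
    rw [Finset.add_sum_erase _ _ hi₀]
  by_cases he : (s.erase i₀).sum t = 0
  · rw [hsplit, he, add_zero]; exact ⟨ht i₀ hi₀, rfl⟩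
  · have hne : (s.erase i₀).Nonempty := by
      by_contra hc
      rw [Finset.not_nonempty_iff_eq_empty] at hc
      rw [hc, Finset.sum_empty] at he; exact he rfl
    set b := (s.erase i₀).inf' hne (fun i => ν (t i)) with hbdef
    have hball : ∀ i ∈ s.erase i₀, b ≤ ν (t i) := fun i hi => Finset.inf'_le _ hi
    have hblt : ν (t i₀) < b := by
      obtain ⟨i, hi, he2⟩ := Finset.exists_mem_eq_inf' hne (fun i => ν (t i))
      rw [hbdef, he2]
      exact hmin i (Finset.mem_of_mem_erase hi) (Finset.ne_of_mem_erase hi)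
    have ht' : ∀ i ∈ s.erase i₀, t i ≠ 0 := fun i hi => ht i (Finset.mem_of_mem_erase hi)
    rcases hν.sum_ge ht' hball with h0 | hge
    · exact absurd h0 he
    · have := hν.add_eq (ht i₀ hi₀) he (lt_of_lt_of_le hblt hge)
      rw [hsplit]; exact this

lemma taylor_sum_range (f : K[X]) (hf : f ≠ 0) (a : K) :
    (∑ j ∈ Finset.range (f.natDegree + 1),
      C ((taylor a f).coeff j) * (X - C a) ^ j) = f := by
  conv_rhs => rw [← sum_taylor_eq f a]
  rw [Polynomial.sum_over_range' _ (by intro n; simp) (f.natDegree + 1)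
    (by rw [natDegree_taylor]; omega)]

lemma qCoeff_X_sub_C (f : K[X]) (a : K) (i : ℕ) (hi : i ≤ f.natDegree) (hf : f ≠ 0) :
    qCoeff (X - C a) f i = C ((taylor a f).coeff i) := by
  set q : K[X] := X - C a with hq
  have hmq : q.Monic := monic_X_sub_C a
  have hmqi : (q ^ i).Monic := hmq.pow _
  set g : K[X] := ∑ j ∈ Finset.Ico i (f.natDegree + 1),
    C ((taylor a f).coeff j) * q ^ (j - i) with hg
  set r : K[X] := ∑ j ∈ Finset.Ico 0 i, C ((taylor a f).coeff j) * q ^ j with hr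
  have hqi : f /ₘ q ^ i = g := by
    have key : r + q ^ i * g = f ∧ r.degree < (q ^ i).degree := by
      constructor
      · rw [hg, Finset.mul_sum]
        have : ∀ j ∈ Finset.Ico i (f.natDegree + 1),
            q ^ i * (C ((taylor a f).coeff j) * q ^ (j - i))
              = C ((taylor a f).coeff j) * q ^ j := by
          intro j hj
          rw [Finset.mem_Ico] at hj
          rw [mul_comm (q ^ i), mul_assoc, ← pow_add]
          congr 2
          omega
        rw [Finset.sum_congr rfl this, hr,
          Finset.sum_Ico_consecutive _ (Nat.zero_le i) (by omega),
          ← Finset.range_eq_Ico]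
        exact taylor_sum_range f hf a
      · have hd : (q ^ i).degree = (i : WithBot ℕ) := by
          rw [degree_eq_natDegree hmqi.ne_zero, natDegree_pow, hq,
            natDegree_X_sub_C, mul_one]
        rw [hd, hr]
        refine lt_of_le_of_lt (degree_sum_le _ _) ?_
        rw [Finset.sup_lt_iff (by exact WithBot.bot_lt_coe i)]
        intro j hj
        rw [Finset.mem_Ico] at hj
        calc (C ((taylor a f).coeff j) * q ^ j).degree
            ≤ (C ((taylor a f).coeff j)).degree + (q ^ j).degree := degree_mul_le _ _
          _ ≤ 0 + (j : WithBot ℕ) := by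
              refine add_le_add degree_C_le ?_
              rw [degree_eq_natDegree (hmq.pow j).ne_zero, natDegree_pow, hq,
                natDegree_X_sub_C, mul_one]
          _ = (j : WithBot ℕ) := by rw [zero_add]
          _ < (i : WithBot ℕ) := by exact_mod_cast hj.2
    exact (div_modByMonic_unique g r hmqi ⟨key.1, key.2⟩).1
  rw [qCoeff, hqi, hq, modByMonic_X_sub_C_eq_C_eval]
  congr 1
  rw [hg, eval_finset_sum]
  have heq : ∀ j ∈ Finset.Ico i (f.natDegree + 1),
      eval a (C ((taylor a f).coeff j) * q ^ (j - i))
        = if j = i then (taylor a f).coeff i else 0 := by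
    intro j hj
    rw [Finset.mem_Ico] at hj
    rw [eval_mul, eval_pow, hq]
    simp only [eval_sub, eval_X, eval_C, sub_self, eval_C]
    by_cases hji : j = i
    · subst hji; simp
    · rw [if_neg hji, zero_pow (by omega), mul_zero]
  rw [Finset.sum_congr rfl heq, Finset.sum_ite_eq' (Finset.Ico i (f.natDegree + 1)) i
    (fun _ => (taylor a f).coeff i), if_pos (by rw [Finset.mem_Ico]; omega)]

/-- Taylor coefficient abbreviation. -/
def tc (f : K[X]) (b : K) (j : ℕ) : K := (taylor b f).coeff j

lemma tc_eq (f : K[X]) (b : K) (j : ℕ) : tc f b j = (hasseDeriv j f).eval b := by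
  rw [tc, taylor_coeff]

lemma tc_zero (f : K[X]) (b : K) : tc f b 0 = f.eval b := by
  rw [tc, taylor_coeff_zero]

lemma tc_natDegree_ne {f : K[X]} (hf : f ≠ 0) (b : K) : tc f b f.natDegree ≠ 0 := by
  have h1 : taylor b f ≠ 0 := fun e => hf (taylor_injective b (by rw [e, map_zero]))
  rw [tc, show f.natDegree = (taylor b f).natDegree from (natDegree_taylor f b).symm,
    coeff_natDegree]
  exact leadingCoeff_ne_zero.mpr h1

lemma qCoeff_ne_iff {f : K[X]} (hf : f ≠ 0) (b : K) {i : ℕ} (hi : i ≤ f.natDegree) :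
    qCoeff (X - C b) f i ≠ 0 ↔ tc f b i ≠ 0 := by
  rw [qCoeff_X_sub_C f b i hi hf, tc, ne_eq, C_eq_zero]

lemma filt_nonempty {f : K[X]} (hf : f ≠ 0) (b : K) :
    (((Finset.range (f.natDegree + 1)).filter
      fun i => qCoeff (X - C b) f i ≠ 0)).Nonempty := by
  refine ⟨f.natDegree, Finset.mem_filter.2 ⟨Finset.mem_range.2 (by omega), ?_⟩⟩
  rw [qCoeff_ne_iff hf b le_rfl]
  exact tc_natDegree_ne hf b

lemma val_qCoeff (hν : IsVal ν) {f : K[X]} (hf : f ≠ 0) (b : K) {i : ℕ}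
    (hi : i ≤ f.natDegree) (hti : tc f b i ≠ 0) :
    ν (qCoeff (X - C b) f i * (X - C b) ^ i)
      = ν (C (tc f b i)) + i * ν (X - C b) := by
  rw [qCoeff_X_sub_C f b i hi hf, ← tc,
    hν.map_mul _ _ (by rwa [ne_eq, C_eq_zero]) (pow_ne_zero _ (X_sub_C_ne_zero b)),
    hν.pow' (X_sub_C_ne_zero b) i]

lemma trunc_le (hν : IsVal ν) {f : K[X]} (hf : f ≠ 0) (b : K) {i : ℕ}
    (hi : i ≤ f.natDegree) (hti : tc f b i ≠ 0) :
    truncVal ν (X - C b) f ≤ ν (C (tc f b i)) + i * ν (X - C b) := by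
  rw [truncVal, dif_pos (filt_nonempty hf b), ← val_qCoeff hν hf b hi hti]
  exact Finset.inf'_le _ (Finset.mem_filter.2 ⟨Finset.mem_range.2 (by omega),
    (qCoeff_ne_iff hf b hi).2 hti⟩)

lemma le_trunc (hν : IsVal ν) {f : K[X]} (hf : f ≠ 0) (b : K) {c : Γ}
    (hc : ∀ i, i ≤ f.natDegree → tc f b i ≠ 0 →
      c ≤ ν (C (tc f b i)) + i * ν (X - C b)) :
    c ≤ truncVal ν (X - C b) f := by
  rw [truncVal, dif_pos (filt_nonempty hf b)]
  refine Finset.le_inf' _ _ ?_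
  intro i hi
  rw [Finset.mem_filter, Finset.mem_range] at hi
  have hiN : i ≤ f.natDegree := by omega
  have hti : tc f b i ≠ 0 := (qCoeff_ne_iff hf b hiN).1 hi.2
  rw [val_qCoeff hν hf b hiN hti]
  exact hc i hiN hti

lemma taylor_sum_filter {f : K[X]} (hf : f ≠ 0) (b : K) :
    (∑ i ∈ (Finset.range (f.natDegree + 1)).filter (fun i => tc f b i ≠ 0),
      C (tc f b i) * (X - C b) ^ i) = f := by
  have h1 := Finset.sum_filter_of_ne (s := Finset.range (f.natDegree + 1))
    (f := fun i => C (tc f b i) * (X - C b) ^ i) (p := fun i => tc f b i ≠ 0)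
    (fun x _ hne h0 => hne (by show C (tc f b x) * (X - C b) ^ x = 0; rw [h0, map_zero, zero_mul]))
  rw [h1]
  simp only [tc]
  exact taylor_sum_range f hf b

lemma C_eval_eq_sum {f : K[X]} (hf : f ≠ 0) (b u : K) :
    C (f.eval u) = ∑ i ∈ (Finset.range (f.natDegree + 1)).filter
        (fun i => tc f b i ≠ 0),
      C (tc f b i) * (C (u - b)) ^ i := by
  conv_lhs => rw [← taylor_sum_filter hf b]
  rw [eval_finset_sum, map_sum]
  refine Finset.sum_congr rfl ?_
  intro i hi
  rw [eval_mul, eval_pow, eval_sub, eval_X, eval_C, eval_C, map_mul, map_pow]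

/-- eventual strict minimality of one index -/
lemma exists_min_stab {Λ : Type*} [LinearOrder Λ] [Nonempty Λ] [NoMaxOrder Λ]
    (γ : Λ → Γ) (hmono : ∀ {ρ σ : Λ}, ρ < σ → γ ρ < γ σ)
    (β : ℕ → Γ) (s : Finset ℕ) (hs : s.Nonempty) :
    ∃ m ∈ s, ∃ ρ₁ : Λ, ∀ ρ, ρ₁ ≤ ρ → ∀ i ∈ s, i ≠ m →
      β m + (m : Γ) * γ ρ < β i + (i : Γ) * γ ρ := by
  classical
  have pair : ∀ i j : ℕ, i ≠ j → ∃ ρ' : Λ,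
      (∀ ρ, ρ' ≤ ρ → β i + (i : Γ) * γ ρ < β j + (j : Γ) * γ ρ) ∨
      (∀ ρ, ρ' ≤ ρ → β j + (j : Γ) * γ ρ < β i + (i : Γ) * γ ρ) := by
    have key : ∀ i j : ℕ, i < j → ∃ ρ' : Λ,
        (∀ ρ, ρ' ≤ ρ → β i + (i : Γ) * γ ρ < β j + (j : Γ) * γ ρ) ∨
        (∀ ρ, ρ' ≤ ρ → β j + (j : Γ) * γ ρ < β i + (i : Γ) * γ ρ) := by
      intro i j hij
      set D : Λ → Γ := fun ρ => (β j + (j : Γ) * γ ρ) - (β i + (i : Γ) * γ ρ) with hD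
      have hDmono : ∀ {ρ σ : Λ}, ρ < σ → D ρ < D σ := by
        intro ρ σ h
        have h1 : γ ρ < γ σ := hmono h
        have h2 : (i : Γ) < (j : Γ) := by exact_mod_cast hij
        rw [hD]
        simp only
        nlinarith
      by_cases hex : ∃ ρ₀ : Λ, 0 ≤ D ρ₀
      · obtain ⟨ρ₀, h0⟩ := hex
        obtain ⟨ρ', hρ'⟩ := exists_gt ρ₀
        refine ⟨ρ', Or.inl ?_⟩
        intro ρ hρ
        have : 0 < D ρ := lt_of_le_of_lt h0 (hDmono (lt_of_lt_of_le hρ' hρ))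
        rw [hD] at this; simp only at this; linarith
      · push_neg at hex
        refine ⟨Classical.arbitrary Λ, Or.inr ?_⟩
        intro ρ _
        have := hex ρ
        rw [hD] at this; simp only at this; linarith
    intro i j hij
    rcases lt_trichotomy i j with h | h | h
    · exact key i j h
    · exact absurd h hij
    · obtain ⟨ρ', hp⟩ := key j i h
      exact ⟨ρ', hp.symm⟩
  induction hs using Finset.Nonempty.cons_induction with
  | singleton a =>
      exact ⟨a, Finset.mem_singleton_self a, Classical.arbitrary Λ,
        fun ρ _ i hi hne => absurd (Finset.mem_singleton.1 hi) hne⟩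
  | cons j s hj hs ih =>
      obtain ⟨m, hm, ρ₁, hρ₁⟩ := ih
      have hjm : j ≠ m := fun e => hj (e ▸ hm)
      obtain ⟨ρ', hp⟩ := pair j m hjm
      rcases hp with hjlt | hmlt
      · refine ⟨j, Finset.mem_cons_self j s, max ρ₁ ρ', ?_⟩
        intro ρ hρ i hi hne
        rcases Finset.mem_cons.1 hi with rfl | his
        · exact absurd rfl hne
        · by_cases him : i = m
          · subst him; exact hjlt ρ (le_trans (le_max_right _ _) hρ)
          · exact lt_trans (hjlt ρ (le_trans (le_max_right _ _) hρ))
              (hρ₁ ρ (le_trans (le_max_left _ _) hρ) i his him)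
      · refine ⟨m, Finset.mem_cons_of_mem hm, max ρ₁ ρ', ?_⟩
        intro ρ hρ i hi hne
        rcases Finset.mem_cons.1 hi with rfl | his
        · exact hmlt ρ (le_trans (le_max_right _ _) hρ)
        · exact hρ₁ ρ (le_trans (le_max_left _ _) hρ) i his hne

end MyHelpers


variable {K : Type*} [Field K] {Γ : Type*} [Field Γ] [LinearOrder Γ] [IsStrictOrderedRing Γ]
variable {Λ : Type*} [LinearOrder Λ] [Nonempty Λ] [NoMaxOrder Λ]
  [WellFoundedLT Λ]

/-- `{a_ρ}` is a pseudo-convergent sequence for `ν`. -/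
def IsPCS (ν : Polynomial K → Γ) (a : Λ → K) : Prop :=
  ∀ ρ σ τ : Λ, ρ < σ → σ < τ →
    ν (C (a σ) - C (a ρ)) < ν (C (a τ) - C (a σ))

/-- `x` is a limit of the pseudo-convergent sequence `{a_ρ}`:
`ν(x - a_ρ) = γ_ρ = ν(a_σ - a_ρ)` for all `σ > ρ`. -/
def XIsLimit (ν : Polynomial K → Γ) (a : Λ → K) : Prop :=
  ∀ ρ σ : Λ, ρ < σ → ν (X - C (a ρ)) = ν (C (a σ) - C (a ρ))

/-- `{a_ρ}` fixes the value of `f`: `ν(f(a_σ))` is eventually constant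
(and in particular `f(a_σ)` is eventually nonzero). -/
def FixesVal (ν : Polynomial K → Γ) (a : Λ → K) (f : Polynomial K) : Prop :=
  ∃ ρ₀ : Λ, ∀ σ : Λ, ρ₀ ≤ σ → f.eval (a σ) ≠ 0 ∧
    ν (C (f.eval (a σ))) = ν (C (f.eval (a ρ₀)))

/-- `{a_ρ}` has a limit in `K`. -/
def HasLimitInK (ν : Polynomial K → Γ) (a : Λ → K) : Prop :=
  ∃ c : K, ∀ ρ σ : Λ, ρ < σ → ν (C c - C (a ρ)) = ν (C (a σ) - C (a ρ))

/-- If `{a_ρ}` fixes the values of all formal derivatives `∂_i f`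
(`1 ≤ i ≤ deg f`), then: if it fixes the value of `f`, then
`ν_{x-a_ρ}(f) = ν(f)` for all large `ρ`; otherwise
`ν_{x-a_ρ}(f) < ν(f)` for every `ρ`. -/
theorem trunc_of_fixes (ν : Polynomial K → Γ) (hν : IsVal ν) (a : Λ → K)
    (hpcs : IsPCS ν a) (hlim : XIsLimit ν a) (f : Polynomial K) (hf : f ≠ 0)
    (hder : ∀ i : ℕ, 1 ≤ i → i ≤ f.natDegree →
      Polynomial.hasseDeriv i f ≠ 0 → FixesVal ν a (Polynomial.hasseDeriv i f)) :
    (FixesVal ν a f → ∃ ρ₀ : Λ, ∀ ρ : Λ, ρ₀ ≤ ρ →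
      truncVal ν (X - C (a ρ)) f = ν f) ∧
    (¬ FixesVal ν a f → ∀ ρ : Λ, truncVal ν (X - C (a ρ)) f < ν f) := by
    classical
  have hγlt : ∀ {ρ σ : Λ}, ρ < σ → ν (X - C (a ρ)) < ν (X - C (a σ)) := by
    intro ρ σ h
    obtain ⟨τ, hτ⟩ := exists_gt σ
    rw [hlim ρ σ h, hlim σ τ hτ]
    exact hpcs ρ σ τ h hτ
  have hγC : ∀ {ρ σ : Λ}, ρ < σ → ν (C (a σ - a ρ)) = ν (X - C (a ρ)) := by
    intro ρ σ h
    rw [map_sub]; exact (hlim ρ σ h).symm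
  have hane : ∀ {ρ σ : Λ}, ρ < σ → a σ - a ρ ≠ 0 := by
    intro ρ σ h e
    rw [sub_eq_zero] at e
    have h2 := hγlt h
    rw [e] at h2
    exact lt_irrefl _ h2
  by_cases hN0 : f.natDegree = 0
  · -- constant polynomial: value is always fixed
    have hc : f = C (f.coeff 0) := eq_C_of_natDegree_eq_zero hN0
    have hc0 : f.coeff 0 ≠ 0 := fun e => hf (by rw [hc, e, map_zero])
    have heval : ∀ u : K, f.eval u = f.coeff 0 := by
      intro u; conv_lhs => rw [hc]
      rw [eval_C]
    have hfix : FixesVal ν a f :=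
      ⟨Classical.arbitrary Λ, fun σ _ => ⟨by rw [heval]; exact hc0, by rw [heval, heval]⟩⟩
    have htc0 : ∀ u, tc f u 0 = f.coeff 0 := fun u => by rw [tc_zero, heval]
    constructor
    · intro _
      refine ⟨Classical.arbitrary Λ, fun ρ _ => ?_⟩
      apply le_antisymm
      · have h1 := trunc_le hν hf (a ρ) (i := 0) (by omega)
          (by rw [htc0]; exact hc0)
        rw [htc0] at h1
        calc truncVal ν (X - C (a ρ)) f
            ≤ ν (C (f.coeff 0)) + (0:ℕ) * ν (X - C (a ρ)) := h1
          _ = ν f := by rw [← hc]; norm_num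
      · apply le_trunc hν hf
        intro i hi hti
        have hi0 : i = 0 := by omega
        subst hi0
        rw [htc0]
        have : ν (C (f.coeff 0)) = ν f := by rw [← hc]
        rw [this]; norm_num
    · intro hnot; exact absurd hfix hnot
  · -- main case: natDegree ≥ 1
    have hN1 : 1 ≤ f.natDegree := by omega
    set S : Finset ℕ := (Finset.Icc 1 f.natDegree).filter
      (fun i => hasseDeriv i f ≠ 0) with hSdef
    have hSmem : ∀ i, i ∈ S ↔ (1 ≤ i ∧ i ≤ f.natDegree ∧ hasseDeriv i f ≠ 0) := by
      intro i; rw [hSdef, Finset.mem_filter, Finset.mem_Icc]; tauto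
    have hNS : f.natDegree ∈ S := by
      rw [hSmem]
      refine ⟨hN1, le_rfl, fun e => ?_⟩
      have h2 := tc_natDegree_ne hf (a (Classical.arbitrary Λ))
      rw [tc_eq, e] at h2; simp at h2
    have hSne : S.Nonempty := ⟨_, hNS⟩
    have hfix : ∀ i ∈ S, ∃ ρ₀ : Λ, ∀ σ : Λ, ρ₀ ≤ σ →
        (hasseDeriv i f).eval (a σ) ≠ 0 ∧
        ν (C ((hasseDeriv i f).eval (a σ)))
          = ν (C ((hasseDeriv i f).eval (a ρ₀))) := by
      intro i hi
      rw [hSmem] at hi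
      exact hder i hi.1 hi.2.1 hi.2.2
    set r : ℕ → Λ := fun i => if hi : i ∈ S then (hfix i hi).choose
      else Classical.arbitrary Λ with hrdef
    set β : ℕ → Γ := fun i => ν (C ((hasseDeriv i f).eval (a (r i)))) with hβdef
    have hβ : ∀ i ∈ S, ∀ ρ, r i ≤ ρ →
        tc f (a ρ) i ≠ 0 ∧ ν (C (tc f (a ρ) i)) = β i := by
      intro i hi ρ hρ
      have hr : r i = (hfix i hi).choose := by rw [hrdef]; exact dif_pos hi
      have hspec := (hfix i hi).choose_spec ρ (by rw [← hr]; exact hρ)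
      rw [tc_eq]
      refine ⟨hspec.1, ?_⟩
      rw [hspec.2, hβdef]
      simp only
      rw [hr]
    set ρd : Λ := S.sup' hSne r with hρd
    have hβd : ∀ i ∈ S, ∀ ρ, ρd ≤ ρ →
        tc f (a ρ) i ≠ 0 ∧ ν (C (tc f (a ρ) i)) = β i :=
      fun i hi ρ hρ => hβ i hi ρ (le_trans (Finset.le_sup' r hi) hρ)
    obtain ⟨m, hmS, ρ₁, hstab⟩ :=
      exists_min_stab (fun ρ : Λ => ν (X - C (a ρ))) hγlt β S hSne
    have hm1 : 1 ≤ m := ((hSmem m).1 hmS).1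
    have hmN : m ≤ f.natDegree := ((hSmem m).1 hmS).2.1
    have hmpos : (0:Γ) < m := by exact_mod_cast hm1
    have hwlt : ∀ {ρ σ : Λ}, ρ < σ →
        β m + (m:Γ) * ν (X - C (a ρ)) < β m + (m:Γ) * ν (X - C (a σ)) := by
      intro ρ σ h
      have := hγlt h
      nlinarith
    set ρ₂ : Λ := max ρd ρ₁ with hρ₂def
    -- membership in S from nonzero Taylor coefficients
    have hmemS : ∀ (ρ : Λ) i, i ≠ 0 → i ≤ f.natDegree → tc f (a ρ) i ≠ 0 → i ∈ S := by
      intro ρ i h0 hN hti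
      rw [hSmem]
      exact ⟨by omega, hN, fun e => hti (by rw [tc_eq, e, eval_zero])⟩
    -- difference formula
    have hSsum : ∀ ρ σ : Λ, ρd ≤ ρ → ρ < σ →
        C (f.eval (a σ)) - C (f.eval (a ρ))
          = ∑ i ∈ S, C (tc f (a ρ) i) * (C (a σ - a ρ)) ^ i := by
      intro ρ σ hρ hσ
      have hT : S = ((Finset.range (f.natDegree + 1)).filter
          (fun i => tc f (a ρ) i ≠ 0)).erase 0 := by
        ext i
        simp only [Finset.mem_erase, Finset.mem_filter, Finset.mem_range,
          Finset.mem_Icc, hSdef]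
        constructor
        · rintro ⟨⟨h1, h2⟩, h3⟩
          exact ⟨by omega, by omega,
            (hβd i ((hSmem i).2 ⟨h1, h2, h3⟩) ρ hρ).1⟩
        · rintro ⟨h1, ⟨h2, h3⟩⟩
          refine ⟨⟨by omega, by omega⟩, fun e => h3 ?_⟩
          rw [tc_eq, e, eval_zero]
      have hCe := C_eval_eq_sum hf (a ρ) (a σ)
      by_cases h0 : (0:ℕ) ∈ (Finset.range (f.natDegree + 1)).filter
          (fun i => tc f (a ρ) i ≠ 0)
      · rw [hCe, ← Finset.add_sum_erase _ _ h0, ← hT, pow_zero, mul_one, tc_zero]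
        ring
      · have h00 : tc f (a ρ) 0 = 0 := by
          by_contra hcon
          exact h0 (Finset.mem_filter.2 ⟨Finset.mem_range.2 (by omega), hcon⟩)
        rw [tc_zero] at h00
        rw [hCe, h00, map_zero, sub_zero, hT, Finset.erase_eq_self.mpr h0]
    -- value of each term
    have hvterm : ∀ (ρ σ : Λ), ρd ≤ ρ → ρ < σ → ∀ i ∈ S,
        C (tc f (a ρ) i) * (C (a σ - a ρ)) ^ i ≠ 0 ∧
        ν (C (tc f (a ρ) i) * (C (a σ - a ρ)) ^ i)
          = β i + (i:Γ) * ν (X - C (a ρ)) := by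
      intro ρ σ hρ hσ i hi
      have h1 := hβd i hi ρ hρ
      have hΔ : (C (a σ - a ρ) : K[X]) ≠ 0 := by
        rw [ne_eq, C_eq_zero]; exact hane hσ
      refine ⟨mul_ne_zero (by rw [ne_eq, C_eq_zero]; exact h1.1) (pow_ne_zero _ hΔ), ?_⟩
      rw [hν.map_mul _ _ (by rw [ne_eq, C_eq_zero]; exact h1.1) (pow_ne_zero _ hΔ),
        hν.pow' hΔ i, hγC hσ, h1.2]
    have hDIFF : ∀ ρ σ : Λ, ρ₂ ≤ ρ → ρ < σ →
        (C (f.eval (a σ)) - C (f.eval (a ρ))) ≠ 0 ∧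
        ν (C (f.eval (a σ)) - C (f.eval (a ρ)))
          = β m + (m:Γ) * ν (X - C (a ρ)) := by
      intro ρ σ hρ hσ
      have hρd' : ρd ≤ ρ := le_trans (le_max_left _ _) hρ
      have hρ1' : ρ₁ ≤ ρ := le_trans (le_max_right _ _) hρ
      have hsum := hSsum ρ σ hρd' hσ
      obtain ⟨hne0, heq⟩ := hν.sum_eq
        (fun i hi => (hvterm ρ σ hρd' hσ i hi).1) hmS
        (fun i hi hne => by
          rw [(hvterm ρ σ hρd' hσ m hmS).2, (hvterm ρ σ hρd' hσ i hi).2]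
          exact hstab ρ hρ1' i hi hne)
      rw [hsum]
      exact ⟨hne0, by rw [heq, (hvterm ρ σ hρd' hσ m hmS).2]⟩
    -- value of polynomial terms
    have hvformula : ∀ (ρ : Λ) i, tc f (a ρ) i ≠ 0 →
        C (tc f (a ρ) i) * (X - C (a ρ)) ^ i ≠ 0 ∧
        ν (C (tc f (a ρ) i) * (X - C (a ρ)) ^ i)
          = ν (C (tc f (a ρ) i)) + (i:Γ) * ν (X - C (a ρ)) := by
      intro ρ i hti
      refine ⟨mul_ne_zero (by rw [ne_eq, C_eq_zero]; exact hti)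
        (pow_ne_zero _ (X_sub_C_ne_zero _)), ?_⟩
      rw [hν.map_mul _ _ (by rw [ne_eq, C_eq_zero]; exact hti)
        (pow_ne_zero _ (X_sub_C_ne_zero _)), hν.pow' (X_sub_C_ne_zero _) i]
    constructor
    · -- f has fixed value
      intro hfixf
      obtain ⟨ρf, hρf⟩ := hfixf
      set β0 := ν (C (f.eval (a ρf))) with hβ0def
      set ρ₃ : Λ := max ρ₂ ρf with hρ₃def
      have hge : ∀ ρ, ρ₃ ≤ ρ → β0 ≤ β m + (m:Γ) * ν (X - C (a ρ)) := by
        intro ρ hρ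
        obtain ⟨σ, hσ⟩ := exists_gt ρ
        have hd := hDIFF ρ σ (le_trans (le_max_left _ _) hρ) hσ
        have hρff : ρf ≤ ρ := le_trans (le_max_right _ _) hρ
        have h1 := hρf σ (le_trans hρff hσ.le)
        have h2 := hρf ρ hρff
        have he : C (f.eval (a σ)) + -(C (f.eval (a ρ)))
            = C (f.eval (a σ)) - C (f.eval (a ρ)) := (sub_eq_add_neg _ _).symm
        have hma := hν.map_add (C (f.eval (a σ))) (-(C (f.eval (a ρ))))
          (by rw [ne_eq, C_eq_zero]; exact h1.1)
          (neg_ne_zero.2 (by rw [ne_eq, C_eq_zero]; exact h2.1))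
          (by rw [he]; exact hd.1)
        rw [he, hd.2, hν.neg' (by rw [ne_eq, C_eq_zero]; exact h2.1), h1.2, h2.2,
          min_self] at hma
        exact hma
      have hstrict : ∃ ρ₀ : Λ, ρ₃ ≤ ρ₀ ∧ ∀ ρ, ρ₀ ≤ ρ →
          β0 < β m + (m:Γ) * ν (X - C (a ρ)) := by
        by_cases hE : ∃ ρ' : Λ, ρ₃ ≤ ρ' ∧ β0 = β m + (m:Γ) * ν (X - C (a ρ'))
        · obtain ⟨ρ', hρ'₃, hρ'e⟩ := hE
          obtain ⟨ρ₀, hρ₀⟩ := exists_gt ρ'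
          refine ⟨ρ₀, le_trans hρ'₃ hρ₀.le, fun ρ hρ => ?_⟩
          rw [hρ'e]
          exact hwlt (lt_of_lt_of_le hρ₀ hρ)
        · push_neg at hE
          exact ⟨ρ₃, le_rfl, fun ρ hρ =>
            lt_of_le_of_ne (hge ρ hρ) (hE ρ hρ)⟩
      obtain ⟨ρ₀, hρ₀₃, hρ₀⟩ := hstrict
      refine ⟨ρ₀, fun ρ hρ => ?_⟩
      have hρ₃' : ρ₃ ≤ ρ := le_trans hρ₀₃ hρ
      have hρ₂' : ρ₂ ≤ ρ := le_trans (le_max_left _ _) hρ₃'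
      have hρd' : ρd ≤ ρ := le_trans (le_max_left _ _) hρ₂'
      have hρ1' : ρ₁ ≤ ρ := le_trans (le_max_right _ _) hρ₂'
      have hρf' : ρf ≤ ρ := le_trans (le_max_right _ _) hρ₃'
      have hev := hρf ρ hρf'
      have hlt0 := hρ₀ ρ hρ
      have hvS : ∀ i, i ≤ f.natDegree → tc f (a ρ) i ≠ 0 → i ≠ 0 →
          β0 < ν (C (tc f (a ρ) i)) + (i:Γ) * ν (X - C (a ρ)) := by
        intro i hiN hti hi0
        have hiS : i ∈ S := hmemS ρ i hi0 hiN hti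
        rw [(hβd i hiS ρ hρd').2]
        rcases eq_or_ne i m with rfl | hne
        · exact hlt0
        · exact lt_trans hlt0 (hstab ρ hρ1' i hiS hne)
      have ht0 : tc f (a ρ) 0 ≠ 0 := by rw [tc_zero]; exact hev.1
      have hv0 : ν (C (tc f (a ρ) 0)) + ((0:ℕ):Γ) * ν (X - C (a ρ)) = β0 := by
        rw [tc_zero, hev.2]; norm_num
      have hνf : ν f = β0 := by
        have hid := taylor_sum_filter hf (a ρ)
        have h0mem : (0:ℕ) ∈ (Finset.range (f.natDegree + 1)).filter
            (fun i => tc f (a ρ) i ≠ 0) :=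
          Finset.mem_filter.2 ⟨Finset.mem_range.2 (by omega), ht0⟩
        obtain ⟨_, heq⟩ := hν.sum_eq
          (fun i hi => (hvformula ρ i (Finset.mem_filter.1 hi).2).1) h0mem
          (fun i hi hne => by
            have hm2 := Finset.mem_filter.1 hi
            have hiN : i ≤ f.natDegree := by
              have := Finset.mem_range.1 hm2.1; omega
            rw [(hvformula ρ 0 ht0).2, (hvformula ρ i hm2.2).2, hv0]
            exact hvS i hiN hm2.2 hne)
        rw [hid] at heq
        rw [heq, (hvformula ρ 0 ht0).2, hv0]
      have htv : truncVal ν (X - C (a ρ)) f = β0 := by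
        apply le_antisymm
        · have h1 := trunc_le hν hf (a ρ) (i := 0) (by omega) ht0
          calc truncVal ν (X - C (a ρ)) f
              ≤ ν (C (tc f (a ρ) 0)) + (0:ℕ) * ν (X - C (a ρ)) := h1
            _ = β0 := hv0
        · apply le_trunc hν hf
          intro i hiN hti
          by_cases hi0 : i = 0
          · subst hi0; rw [hv0]
          · exact (hvS i hiN hti hi0).le
      rw [htv, hνf]
    · -- f does not have fixed value
      intro hnot
      have hkey : ∀ ρ, ρ₂ ≤ ρ → f.eval (a ρ) ≠ 0 ∧
          ν (C (f.eval (a ρ))) = β m + (m:Γ) * ν (X - C (a ρ)) := by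
        have hblem : ∀ ρ', ρ₂ ≤ ρ' → f.eval (a ρ') ≠ 0 →
            ν (C (f.eval (a ρ'))) < β m + (m:Γ) * ν (X - C (a ρ')) → False := by
          intro ρ' hρ' hnz' hltv
          apply hnot
          refine ⟨ρ', fun σ hσ => ?_⟩
          rcases eq_or_lt_of_le hσ with rfl | hσlt
          · exact ⟨hnz', rfl⟩
          · have hd := hDIFF ρ' σ hρ' hσlt
            have hae := hν.add_eq (g := C (f.eval (a ρ')))
              (h := C (f.eval (a σ)) - C (f.eval (a ρ')))
              (by rw [ne_eq, C_eq_zero]; exact hnz') hd.1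
              (by rw [hd.2]; exact hltv)
            have he : C (f.eval (a ρ')) + (C (f.eval (a σ)) - C (f.eval (a ρ')))
                = C (f.eval (a σ)) := by ring
            rw [he] at hae
            exact ⟨fun e => hae.1 (by rw [e, map_zero]), hae.2⟩
        intro ρ hρ
        have hnz : f.eval (a ρ) ≠ 0 := by
          intro h0
          apply hnot
          obtain ⟨σ₀, hσ₀⟩ := exists_gt ρ
          refine ⟨σ₀, fun σ hσ => ?_⟩
          have hρσ : ρ < σ := lt_of_lt_of_le hσ₀ hσ
          have hd := hDIFF ρ σ hρ hρσ
          rw [h0, map_zero, sub_zero] at hd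
          have hd0 := hDIFF ρ σ₀ hρ hσ₀
          rw [h0, map_zero, sub_zero] at hd0
          refine ⟨fun e => hd.1 (by rw [e, map_zero]), ?_⟩
          rw [hd.2, hd0.2]
        rcases lt_trichotomy (ν (C (f.eval (a ρ))))
            (β m + (m:Γ) * ν (X - C (a ρ))) with hltv | heqv | hgtv
        · exact (hblem ρ hρ hnz hltv).elim
        · exact ⟨hnz, heqv⟩
        · exfalso
          obtain ⟨σ, hσ⟩ := exists_gt ρ
          have hd := hDIFF ρ σ hρ hσ
          have hae := hν.add_eq (g := C (f.eval (a σ)) - C (f.eval (a ρ)))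
            (h := C (f.eval (a ρ))) hd.1
            (by rw [ne_eq, C_eq_zero]; exact hnz)
            (by rw [hd.2]; exact hgtv)
          have he : (C (f.eval (a σ)) - C (f.eval (a ρ))) + C (f.eval (a ρ))
              = C (f.eval (a σ)) := by ring
          rw [he, hd.2] at hae
          have hnzσ : f.eval (a σ) ≠ 0 := fun e => hae.1 (by rw [e, map_zero])
          refine hblem σ (le_trans hρ hσ.le) hnzσ ?_
          rw [hae.2]
          exact hwlt hσ
      have hbound : ∀ ρ, ρ₂ ≤ ρ → ∀ i, i ≤ f.natDegree → tc f (a ρ) i ≠ 0 →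
          β m + (m:Γ) * ν (X - C (a ρ))
            ≤ ν (C (tc f (a ρ) i)) + (i:Γ) * ν (X - C (a ρ)) := by
        intro ρ hρ i hiN hti
        have hρd' : ρd ≤ ρ := le_trans (le_max_left _ _) hρ
        have hρ1' : ρ₁ ≤ ρ := le_trans (le_max_right _ _) hρ
        by_cases hi0 : i = 0
        · subst hi0
          rw [tc_zero, (hkey ρ hρ).2]
          norm_num
        · have hiS : i ∈ S := hmemS ρ i hi0 hiN hti
          rw [(hβd i hiS ρ hρd').2]
          rcases eq_or_ne i m with rfl | hne
          · exact le_rfl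
          · exact (hstab ρ hρ1' i hiS hne).le
      have hνf : ∀ ρ, ρ₂ ≤ ρ → β m + (m:Γ) * ν (X - C (a ρ)) ≤ ν f := by
        intro ρ hρ
        have hid := taylor_sum_filter hf (a ρ)
        rcases hν.sum_ge
          (s := (Finset.range (f.natDegree + 1)).filter (fun i => tc f (a ρ) i ≠ 0))
          (t := fun i => C (tc f (a ρ) i) * (X - C (a ρ)) ^ i)
          (fun i hi => (hvformula ρ i (Finset.mem_filter.1 hi).2).1)
          (b := β m + (m:Γ) * ν (X - C (a ρ)))
          (fun i hi => by
            have hm2 := Finset.mem_filter.1 hi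
            have hiN : i ≤ f.natDegree := by
              have := Finset.mem_range.1 hm2.1; omega
            rw [(hvformula ρ i hm2.2).2]
            exact hbound ρ hρ i hiN hm2.2) with h0 | hge2
        · rw [hid] at h0; exact absurd h0 hf
        · rw [hid] at hge2; exact hge2
      intro ρ
      obtain ⟨σ, hσ⟩ := exists_gt (max ρ ρ₂)
      have hσρ : ρ < σ := lt_of_le_of_lt (le_max_left _ _) hσ
      have hσ₂ : ρ₂ ≤ σ := le_of_lt (lt_of_le_of_lt (le_max_right _ _) hσ)
      obtain ⟨τ, hτ⟩ := exists_gt σ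
      have h1 : truncVal ν (X - C (a ρ)) f ≤ ν (C (f.eval (a σ))) := by
        have hid := (C_eval_eq_sum hf (a ρ) (a σ)).symm
        have hΔ : (C (a σ - a ρ) : K[X]) ≠ 0 := by
          rw [ne_eq, C_eq_zero]; exact hane hσρ
        rcases hν.sum_ge
          (s := (Finset.range (f.natDegree + 1)).filter (fun i => tc f (a ρ) i ≠ 0))
          (t := fun i => C (tc f (a ρ) i) * (C (a σ - a ρ)) ^ i)
          (fun i hi => mul_ne_zero
            (by rw [ne_eq, C_eq_zero]; exact (Finset.mem_filter.1 hi).2)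
            (pow_ne_zero _ hΔ))
          (b := truncVal ν (X - C (a ρ)) f)
          (fun i hi => by
            have hm2 := Finset.mem_filter.1 hi
            have hiN : i ≤ f.natDegree := by
              have := Finset.mem_range.1 hm2.1; omega
            rw [hν.map_mul _ _ (by rw [ne_eq, C_eq_zero]; exact hm2.2)
              (pow_ne_zero _ hΔ), hν.pow' hΔ i, hγC hσρ]
            exact trunc_le hν hf (a ρ) hiN hm2.2) with h0 | hge2
        · rw [hid] at h0
          exact absurd (by rwa [C_eq_zero] at h0) (hkey σ hσ₂).1
        · rwa [hid] at hge2
      have h2 : ν (C (f.eval (a σ))) = β m + (m:Γ) * ν (X - C (a σ)) :=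
        (hkey σ hσ₂).2
      have h3 : β m + (m:Γ) * ν (X - C (a σ))
          < β m + (m:Γ) * ν (X - C (a τ)) := hwlt hτ
      have h4 : β m + (m:Γ) * ν (X - C (a τ)) ≤ ν f :=
        hνf τ (le_trans hσ₂ hτ.le)
      calc truncVal ν (X - C (a ρ)) f ≤ ν (C (f.eval (a σ))) := h1
        _ = β m + (m:Γ) * ν (X - C (a σ)) := h2
        _ < β m + (m:Γ) * ν (X - C (a τ)) := h3
        _ ≤ ν f := h4
end
end
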